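/- Let M be a Noetherian (t−1)-invertible Λ-module and suppose t^n − 1 ∈ Ann(M) for some n = p^r, where p is a prime number and r ≥ 1. Then M is ℤ-torsion, i.e., every element of M has finite additive order. -/

import Mathlib

open Polynomial

/-- `Λ` is the ring `ℤ[t,t⁻¹]` of Laurent polynomials with integer coefficients. -/
abbrev Λ : Type := LaurentPolynomial ℤ

/-- `tL` is the element `t` of `Λ = ℤ[t,t⁻¹]`. -/
noncomputable def tL : Λ := LaurentPolynomial.T 1

/-- Mod `p`, `(X-1)^(p^r) = X^(p^r) - 1`. -/
lemma aux_freshman (p r : ℕ) (hp : p.Prime) :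
    ∃ f : ℤ[X], (X - 1) ^ (p ^ r) = X ^ (p ^ r) - 1 + (p : ℤ[X]) * f := by
  have : Fact p.Prime := ⟨hp⟩
  have hdvd : (C (p : ℤ)) ∣ ((X - 1) ^ (p ^ r) - (X ^ (p ^ r) - 1)) := by
    rw [Polynomial.C_dvd_iff_dvd_coeff]
    intro i
    have hmap : (((X - 1) ^ (p ^ r) - (X ^ (p ^ r) - 1) : ℤ[X]).map
        (Int.castRingHom (ZMod p))) = 0 := by
      simp only [Polynomial.map_sub, Polynomial.map_pow, Polynomial.map_one, Polynomial.map_X]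
      rw [sub_pow_char_pow, one_pow, sub_self]
    have := congrArg (fun q => Polynomial.coeff q i) hmap
    simp only [Polynomial.coeff_map, Polynomial.coeff_zero] at this
    exact (ZMod.intCast_zmod_eq_zero_iff_dvd _ _).mp this
  obtain ⟨f, hf⟩ := hdvd
  refine ⟨f, ?_⟩
  have hC : (C (p : ℤ)) = (p : ℤ[X]) := by simp
  rw [hC] at hf
  linear_combination hf

/-- If a Noetherian (t−1)-invertible Λ-module is annihilated by `t^(p^r) − 1` with `p` prime,
then it is ℤ-torsion. -/
theorem zTorsion_of_prime_power_unipotent (M : Type) [AddCommGroup M] [Module Λ M]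
    [IsNoetherian Λ M]
    (hM : Function.Bijective (fun v : M => (tL - 1) • v))
    (p r : ℕ) (hp : p.Prime) (hr : 1 ≤ r)
    (hann : ∀ v : M, (tL ^ (p ^ r) - 1) • v = 0) :
    ∀ v : M, ∃ n : ℕ, 0 < n ∧ n • v = 0 := by
  classical
  set N : ℕ := p ^ r with hNdef
  have hNpos : 0 < N := pow_pos hp.pos r
  -- `t^N` acts as the identity
  have hT1 : ∀ v : M, (tL ^ N) • v = v := by
    intro v
    have h := hann v
    rwa [sub_smul, one_smul, sub_eq_zero] at h
  have hTN : ∀ v : M, (LaurentPolynomial.T (N : ℤ) : Λ) • v = v := by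
    intro v
    have h := hT1 v
    rwa [tL, LaurentPolynomial.T_pow, mul_one] at h
  have hTNneg : ∀ v : M, (LaurentPolynomial.T (-(N : ℤ)) : Λ) • v = v := by
    intro v
    conv_lhs => rw [← hTN v]
    rw [← mul_smul, ← LaurentPolynomial.T_add, neg_add_cancel, LaurentPolynomial.T_zero, one_smul]
  have hTNq : ∀ (q : ℤ) (v : M), (LaurentPolynomial.T ((N : ℤ) * q) : Λ) • v = v := by
    intro q
    induction q using Int.induction_on with
    | zero => intro v; simp [LaurentPolynomial.T_zero]
    | succ k ih =>
      intro v
      have he : (N : ℤ) * (k + 1) = (N : ℤ) * k + N := by ring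
      rw [he, LaurentPolynomial.T_add, mul_smul, hTN, ih]
    | pred k ih =>
      intro v
      have he : (N : ℤ) * (-k - 1) = (N : ℤ) * (-k) + -(N : ℤ) := by ring
      rw [he, LaurentPolynomial.T_add, mul_smul, hTNneg, ih]
  -- action of `T m` only depends on `m` mod `N`
  have hTm : ∀ (m : ℤ) (v : M),
      (LaurentPolynomial.T m : Λ) • v = (LaurentPolynomial.T (m % (N : ℤ)) : Λ) • v := by
    intro m v
    conv_lhs => rw [← Int.mul_ediv_add_emod m (N : ℤ)]
    rw [LaurentPolynomial.T_add, mul_smul, hTNq]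
  -- finite generation of `M` as a `ℤ`-module
  obtain ⟨S, hS⟩ : (⊤ : Submodule Λ M).FG := IsNoetherian.noetherian ⊤
  set A : Finset M := (Finset.range N ×ˢ S).image (fun q => tL ^ q.1 • q.2) with hAdef
  set P : Submodule ℤ M := Submodule.span ℤ (A : Set M) with hPdef
  have hTmem : ∀ (m : ℤ) (x : M), x ∈ P → (LaurentPolynomial.T m : Λ) • x ∈ P := by
    intro m x hx
    refine Submodule.span_induction (p := fun y _ => (LaurentPolynomial.T m : Λ) • y ∈ P)
        ?_ ?_ ?_ ?_ hx
    · intro a ha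
      simp only [hAdef, Finset.coe_image, Set.mem_image, Finset.mem_coe, Finset.mem_product,
        Finset.mem_range] at ha
      obtain ⟨⟨i, s⟩, ⟨hi, hs⟩, rfl⟩ := ha
      have h1 : (LaurentPolynomial.T m : Λ) • (tL ^ i • s)
          = (LaurentPolynomial.T (m + (i : ℤ)) : Λ) • s := by
        rw [tL, LaurentPolynomial.T_pow, mul_one, ← mul_smul, ← LaurentPolynomial.T_add]
      rw [h1, hTm]
      set j : ℕ := ((m + (i : ℤ)) % (N : ℤ)).toNat with hjdef
      have hj0 : (0 : ℤ) ≤ (m + (i : ℤ)) % (N : ℤ) :=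
        Int.emod_nonneg _ (by exact_mod_cast hNpos.ne')
      have hjlt : (m + (i : ℤ)) % (N : ℤ) < (N : ℤ) :=
        Int.emod_lt_of_pos _ (by exact_mod_cast hNpos)
      have hjc : ((j : ℤ)) = (m + (i : ℤ)) % (N : ℤ) := Int.toNat_of_nonneg hj0
      have hjltN : j < N := by omega
      have h2 : (LaurentPolynomial.T ((m + (i : ℤ)) % (N : ℤ)) : Λ) • s = tL ^ j • s := by
        rw [tL, LaurentPolynomial.T_pow, mul_one, hjc]
      rw [h2]
      apply Submodule.subset_span
      simp only [hAdef, Finset.coe_image, Set.mem_image, Finset.mem_coe, Finset.mem_product,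
        Finset.mem_range]
      exact ⟨(j, s), ⟨hjltN, hs⟩, rfl⟩
    · simp
    · intro y z _ _ hy hz
      rw [smul_add]
      exact P.add_mem hy hz
    · intro a y _ hy
      rw [smul_comm]
      exact P.smul_mem a hy
  have hΛmem : ∀ (c : Λ) (x : M), x ∈ P → c • x ∈ P := by
    intro c
    induction c using LaurentPolynomial.induction_on' with
    | add f g hf hg =>
      intro x hx
      rw [add_smul]
      exact P.add_mem (hf x hx) (hg x hx)
    | C_mul_T n a =>
      intro x hx
      have hC : (LaurentPolynomial.C a : Λ) = ((a : ℤ) : Λ) := eq_intCast LaurentPolynomial.C a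
      rw [mul_smul, hC, Int.cast_smul_eq_zsmul]
      exact P.smul_mem a (hTmem n x hx)
  have hA : P = ⊤ := by
    rw [eq_top_iff]
    intro v _
    have hv : v ∈ Submodule.span Λ (S : Set M) := by rw [hS]; trivial
    refine Submodule.span_induction (p := fun y _ => y ∈ P) ?_ ?_ ?_ ?_ hv
    · intro s hs
      apply Submodule.subset_span
      simp only [hAdef, Finset.coe_image, Set.mem_image, Finset.mem_coe, Finset.mem_product,
        Finset.mem_range]
      exact ⟨(0, s), ⟨hNpos, hs⟩, by simp⟩
    · exact P.zero_mem
    · intro y z _ _ hy hz; exact P.add_mem hy hz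
    · intro c y _ hy; exact hΛmem c y hy
  -- multiplication by `p` is surjective on `M`
  obtain ⟨f, hf⟩ := aux_freshman p r hp
  have hfΛ : (tL - 1) ^ N = tL ^ N - 1 + (p : Λ) * (Polynomial.toLaurent f) := by
    have h := congrArg (Polynomial.toLaurent (R := ℤ)) hf
    simpa only [map_sub, map_pow, map_add, map_mul, map_one, map_natCast,
      Polynomial.toLaurent_X, tL] using h
  have hPsmul : ∀ v : M, (tL - 1) ^ N • v = (p : ℤ) • ((Polynomial.toLaurent f) • v) := by
    intro v
    rw [hfΛ, add_smul, hann v, zero_add, mul_smul]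
    have : ((p : ℤ) : Λ) = (p : Λ) := by push_cast; ring
    rw [← this, Int.cast_smul_eq_zsmul]
  have hsurjpow : ∀ (k : ℕ) (v : M), ∃ w : M, (tL - 1) ^ k • w = v := by
    intro k
    induction k with
    | zero => intro v; exact ⟨v, by simp⟩
    | succ k ih =>
      intro v
      obtain ⟨w₁, hw₁⟩ := hM.2 v
      obtain ⟨w, hw⟩ := ih w₁
      refine ⟨w, ?_⟩
      rw [pow_succ', mul_smul, hw]
      exact hw₁
  have hp_surj : ∀ v : M, ∃ w : M, v = (p : ℤ) • w := by
    intro v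
    obtain ⟨u, hu⟩ := hsurjpow N v
    exact ⟨(Polynomial.toLaurent f) • u, by rw [← hu, hPsmul u]⟩
  -- Nakayama
  have hfg : (⊤ : Submodule ℤ M).FG := ⟨A, hA⟩
  have hle : (⊤ : Submodule ℤ M) ≤ (Ideal.span {(p : ℤ)}) • (⊤ : Submodule ℤ M) := by
    intro v _
    obtain ⟨w, hw⟩ := hp_surj v
    rw [hw]
    exact Submodule.smul_mem_smul (Ideal.mem_span_singleton_self _) Submodule.mem_top
  obtain ⟨c, hc1, hc0⟩ :=
    Submodule.exists_sub_one_mem_and_smul_eq_zero_of_fg_of_le_smul _ _ hfg hle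
  have hcne : c ≠ 0 := by
    rintro rfl
    rw [zero_sub] at hc1
    have h1 : (p : ℤ) ∣ (-1 : ℤ) := Ideal.mem_span_singleton.mp hc1
    have h2 : (p : ℤ) ∣ (1 : ℤ) := (dvd_neg).mp h1
    have h3 : (p : ℤ) ≤ 1 := Int.le_of_dvd one_pos h2
    have := hp.two_le
    omega
  intro v
  refine ⟨c.natAbs, Int.natAbs_pos.mpr hcne, ?_⟩
  have h0 : c • v = 0 := hc0 v Submodule.mem_top
  have hz : ((c.natAbs : ℤ)) • v = 0 := by
    rcases Int.natAbs_eq c with h | h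
    · rw [← h]; exact h0
    · have : ((c.natAbs : ℤ)) = -c := by omega
      rw [this, neg_smul, h0, neg_zero]
  rw [← natCast_zsmul]
  exact hz
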